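/- Fix a field k and c⃗ = (c₁,…,c_m). Let B ⊆ A⁺_{c⃗} be a k-subalgebra of corank g that is spanned as a k-vector space by 1 together with a set of monomials tᵢ^d. For each i, set Mᵢ = {0} ∪ {d : 1 ≤ d ≤ cᵢ − 1, tᵢ^d ∈ B} ∪ {d ∈ ℕ : d ≥ cᵢ}. Then each Mᵢ is a numerical monoid with conductor c(Mᵢ) ≤ cᵢ, the genera satisfy Σ_{i=1}^m g(Mᵢ) = g, and B = k·1 ⊕ span_k{tᵢ^d : 1 ≤ d ≤ cᵢ − 1, d ∈ Mᵢ}. -/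

import Mathlib

set_option synthInstance.maxHeartbeats 1000000
set_option maxHeartbeats 2000000
open Polynomial

/-- The truncated polynomial ring `k[X]/(X^c)`. -/
abbrev TruncP (k : Type*) [CommRing k] (c : ℕ) : Type _ :=
  Polynomial k ⧸ Ideal.span {(X : Polynomial k) ^ c}

/-- The ambient product algebra `∏ i, k[tᵢ]/(tᵢ^{cᵢ})`. -/
abbrev TruncPi (k : Type*) [CommRing k] {ι : Type*} (c : ι → ℕ) : Type _ :=
  ∀ i, TruncP k (c i)

/-- The image of `X` in `TruncP k c`. -/
noncomputable def truncX (k : Type*) [CommRing k] (c : ℕ) : TruncP k c :=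
  Ideal.Quotient.mk _ X

/-- The monomial `tᵢ^j` in `∏ i, k[tᵢ]/(tᵢ^{cᵢ})`. -/
noncomputable def tpow {k : Type*} [CommRing k] {ι : Type*} [DecidableEq ι]
    (c : ι → ℕ) (i : ι) (j : ℕ) : TruncPi k c :=
  Pi.single i (truncX k (c i) ^ j)

/-- The constant term of a truncated polynomial (evaluation at `0`), for `c ≥ 1`. -/
noncomputable def constTerm (k : Type*) [CommRing k] (c : ℕ) (hc : 1 ≤ c) :
    TruncP k c →ₐ[k] k :=
  Ideal.Quotient.liftₐ _ (aeval (0 : k)) (by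
    intro a ha
    rw [Ideal.mem_span_singleton] at ha
    obtain ⟨q, rfl⟩ := ha
    have h0 : (0 : k) ^ c = 0 := zero_pow (Nat.one_le_iff_ne_zero.mp hc)
    simp [h0])

/-- `A⁺`: the subalgebra of tuples with all constant terms equal. -/
noncomputable def Aplus (k : Type*) [CommRing k] {ι : Type*} (c : ι → ℕ)
    (hc : ∀ i, 1 ≤ c i) : Subalgebra k (TruncPi k c) :=
  ⨅ (i : ι) (j : ι),
    AlgHom.equalizer
      ((constTerm k (c i) (hc i)).comp (Pi.evalAlgHom k (fun i => TruncP k (c i)) i))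
      ((constTerm k (c j) (hc j)).comp (Pi.evalAlgHom k (fun i => TruncP k (c i)) j))

/-- `m_I`: the span of the monomials `tᵢ^j`, `i ∈ I`, `1 ≤ j ≤ cᵢ - 1`. -/
noncomputable def mPart (k : Type*) [CommRing k] {ι : Type*} [DecidableEq ι]
    (c : ι → ℕ) (I : Set ι) : Submodule k (TruncPi k c) :=
  Submodule.span k {x | ∃ i ∈ I, ∃ j, 1 ≤ j ∧ j < c i ∧ x = tpow c i j}

/-- `𝔪^d`: the span of the monomials of degree at least `d`. -/
noncomputable def mPow (k : Type*) [CommRing k] {ι : Type*} [DecidableEq ι]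
    (c : ι → ℕ) (d : ℕ) : Submodule k (TruncPi k c) :=
  Submodule.span k {x | ∃ i, ∃ j, d ≤ j ∧ 1 ≤ j ∧ j < c i ∧ x = tpow c i j}

/-- Componentwise projection onto the coordinates in `I` (the projection along `m_{Iᶜ}`). -/
noncomputable def projL (k : Type*) [CommRing k] {ι : Type*} [DecidableEq ι] (c : ι → ℕ)
    (I : Finset ι) : TruncPi k c →ₗ[k] TruncPi k c where
  toFun x i := if i ∈ I then x i else 0
  map_add' x y := by funext i; by_cases h : i ∈ I <;> simp [h]
  map_smul' r x := by funext i; by_cases h : i ∈ I <;> simp [h]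

/-- Scaling `t ↦ λ·t` on `k[t]/(t^c)`, as a `k`-algebra homomorphism. -/
noncomputable def scaleHom (k : Type*) [CommRing k] (c : ℕ) (lam : k) :
    TruncP k c →ₐ[k] TruncP k c :=
  Ideal.Quotient.liftₐ _ (aeval (lam • truncX k c)) (by
    intro a ha
    rw [Ideal.mem_span_singleton] at ha
    obtain ⟨q, rfl⟩ := ha
    have hx : truncX k c ^ c = 0 := by
      show (Ideal.Quotient.mk (Ideal.span {(X : Polynomial k) ^ c}) X) ^ c = 0
      rw [← map_pow, Ideal.Quotient.eq_zero_iff_mem]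
      exact Ideal.mem_span_singleton_self _
    simp [_root_.smul_pow, hx])

/-- The torus action `tᵢ ↦ λᵢ·tᵢ` on `∏ i, k[tᵢ]/(tᵢ^{cᵢ})`. -/
noncomputable def torusHom {k : Type*} [CommRing k] {ι : Type*} (c : ι → ℕ) (lam : ι → k) :
    TruncPi k c →ₐ[k] TruncPi k c :=
  Pi.algHom k _ fun i => (scaleHom k (c i) (lam i)).comp (Pi.evalAlgHom k _ i)

/-- Restriction of a tuple to the coordinates satisfying `P`, as an algebra hom. -/
noncomputable def restrictAlg (k : Type*) [CommRing k] {ι : Type*} (c : ι → ℕ)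
    (P : ι → Prop) : TruncPi k c →ₐ[k] TruncPi k (fun i : {i // P i} => c i.1) where
  toFun x i := x i.1
  map_one' := rfl
  map_mul' _ _ := rfl
  map_zero' := rfl
  map_add' _ _ := rfl
  commutes' _ := rfl

/-- The set `k·1 ⊕ {b + b' + φ(b')}` associated to a gluing datum. -/
def graphSet {k A : Type*} [CommRing k] [CommRing A] [Algebra k A]
    (bI bI' : Submodule k A) (φ : ↥bI' →ₗ[k] A) : Set A :=
  {z | ∃ r : k, ∃ b ∈ bI, ∃ b' : ↥bI', z = r • (1 : A) + b + ↑b' + φ b'}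

/-- The set of exponents associated to the `i`-th branch of a monomial subalgebra. -/
def monoidOf {k : Type*} [Field k] {m : ℕ} (c : Fin m → ℕ)
    (B : Subalgebra k (TruncPi k c)) (i : Fin m) : Set ℕ :=
  {0} ∪ {d | 1 ≤ d ∧ d < c i ∧ tpow c i d ∈ B} ∪ {d | c i ≤ d}

noncomputable def truncBasis (k : Type*) [Field k] (c : ℕ) : Module.Basis (Fin c) k (TruncP k c) :=
  ((AdjoinRoot.powerBasis (f := (X : Polynomial k) ^ c) (pow_ne_zero _ X_ne_zero)).basis).reindex
    (finCongr (by simp))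

lemma truncBasis_apply (k : Type*) [Field k] (c : ℕ) (j : Fin c) :
    truncBasis k c j = truncX k c ^ (j : ℕ) := by
  rw [truncBasis]
  erw [Module.Basis.reindex_apply, PowerBasis.basis_eq_pow, AdjoinRoot.powerBasis_gen]
  · rfl

lemma constTerm_pow (k : Type*) [Field k] (c : ℕ) (hc : 1 ≤ c) (j : ℕ) :
    constTerm k c hc (truncX k c ^ j) = if j = 0 then 1 else 0 := by
  have : truncX k c ^ j = Ideal.Quotient.mk _ (X ^ j : Polynomial k) := by
    simp [truncX]
  rw [this, constTerm, Ideal.Quotient.liftₐ_apply]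
  erw [Ideal.Quotient.lift_mk]
  simp [zero_pow_eq]

noncomputable def piBasis (k : Type*) [Field k] {m : ℕ} (c : Fin m → ℕ) :
    Module.Basis (Σ i : Fin m, Fin (c i)) k (TruncPi k c) :=
  Pi.basis (fun i => truncBasis k (c i))

lemma piBasis_apply (k : Type*) [Field k] {m : ℕ} (c : Fin m → ℕ) (p : Σ i : Fin m, Fin (c i)) :
    piBasis k c p = tpow c p.1 (p.2 : ℕ) := by
  obtain ⟨i, j⟩ := p
  rw [piBasis, Pi.basis_apply]
  show Pi.single i _ = _
  rw [truncBasis_apply]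
  rfl

lemma truncX_pow_eq_zero (k : Type*) [CommRing k] (c j : ℕ) (h : c ≤ j) :
    truncX k c ^ j = 0 := by
  rw [truncX, ← map_pow, Ideal.Quotient.eq_zero_iff_mem, Ideal.mem_span_singleton]
  exact pow_dvd_pow X h

lemma tpow_eq_zero {k : Type*} [CommRing k] {ι : Type*} [DecidableEq ι]
    (c : ι → ℕ) (i : ι) (j : ℕ) (h : c i ≤ j) : (tpow c i j : TruncPi k c) = 0 := by
  rw [tpow, truncX_pow_eq_zero _ _ _ h, Pi.single_zero]

lemma one_eq_sum_tpow (k : Type*) [Field k] {m : ℕ} (c : Fin m → ℕ) :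
    (1 : TruncPi k c) = ∑ i, tpow c i 0 := by
  simp only [tpow, pow_zero]
  rw [Finset.univ_sum_single (f := fun i => (1 : TruncP k (c i)))]
  rfl

lemma tpow_mul {k : Type*} [Field k] {ι : Type*} [DecidableEq ι]
    (c : ι → ℕ) (i : ι) (a b : ℕ) :
    (tpow c i a : TruncPi k c) * tpow c i b = tpow c i (a + b) := by
  rw [tpow, tpow, tpow, ← Pi.single_mul, pow_add]

lemma coord_piBasis (k : Type*) [Field k] {m : ℕ} (c : Fin m → ℕ)
    (p q : Σ i : Fin m, Fin (c i)) :
    (piBasis k c).coord q (piBasis k c p) = if p = q then 1 else 0 := by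
  rw [Module.Basis.coord_apply, Module.Basis.repr_self, Finsupp.single_apply]

noncomputable def vfam (k : Type*) [Field k] {m : ℕ} (c : Fin m → ℕ) (J : Fin m → Finset ℕ) :
    Option ((i : Fin m) × {d // d ∈ J i}) → TruncPi k c
  | none => 1
  | some p => tpow c p.1 p.2.1

lemma coord_one (k : Type*) [Field k] {m : ℕ} (c : Fin m → ℕ) (hc : ∀ i, 1 ≤ c i)
    (q : Σ i : Fin m, Fin (c i)) :
    (piBasis k c).coord q (1 : TruncPi k c) = if (q.2 : ℕ) = 0 then 1 else 0 := by
  rw [one_eq_sum_tpow, map_sum]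
  have : ∀ i, tpow c i 0 = piBasis k c ⟨i, ⟨0, hc i⟩⟩ := fun i => (piBasis_apply k c ⟨i, ⟨0, hc i⟩⟩).symm
  simp_rw [this, coord_piBasis]
  obtain ⟨qi, qj⟩ := q
  by_cases h : (qj : ℕ) = 0
  · rw [if_pos h, Finset.sum_eq_single qi]
    · rw [if_pos]
      have : qj = ⟨0, hc qi⟩ := by ext; exact h
      rw [this]
    · intro b _ hb
      rw [if_neg]; intro he; exact hb (congrArg Sigma.fst he)
    · simp
  · rw [if_neg h, Finset.sum_eq_zero]
    intro i _
    rw [if_neg]; intro he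
    apply h
    have := (Sigma.mk.inj_iff.mp he)
    obtain ⟨rfl, h2⟩ := this
    have := congrArg Fin.val (eq_of_heq h2)
    exact this.symm

lemma vfam_li (k : Type*) [Field k] {m : ℕ} (hm : 1 ≤ m) (c : Fin m → ℕ)
    (hc : ∀ i, 1 ≤ c i) (J : Fin m → Finset ℕ) (hJ : ∀ i, J i ⊆ Finset.Ico 1 (c i)) :
    LinearIndependent k (vfam k c J) := by
  classical
  rw [Fintype.linearIndependent_iff]
  intro g hg
  have key : ∀ q : Σ i : Fin m, Fin (c i),
      ∑ x, g x • (piBasis k c).coord q (vfam k c J x) = 0 := by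
    intro q
    have := congrArg ((piBasis k c).coord q) hg
    rw [map_sum, map_zero] at this
    simpa [map_smul] using this
  -- coordinates of each family member
  have hmem : ∀ (p : (i : Fin m) × {d // d ∈ J i}), 1 ≤ (p.2 : ℕ) ∧ (p.2 : ℕ) < c p.1 := by
    intro p
    have := hJ p.1 p.2.2
    rw [Finset.mem_Ico] at this
    exact this
  have hsome : ∀ (p : (i : Fin m) × {d // d ∈ J i}) (q : Σ i : Fin m, Fin (c i)),
      (piBasis k c).coord q (vfam k c J (some p))
        = if (⟨p.1, ⟨p.2, (hmem p).2⟩⟩ : Σ i : Fin m, Fin (c i)) = q then 1 else 0 := by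
    intro p q
    have : vfam k c J (some p) = piBasis k c ⟨p.1, ⟨p.2, (hmem p).2⟩⟩ := by
      rw [piBasis_apply]; rfl
    rw [this, coord_piBasis]
  -- g (some p) = 0
  have hg_some : ∀ p, g (some p) = 0 := by
    intro p
    have hq := key ⟨p.1, ⟨p.2, (hmem p).2⟩⟩
    rw [Finset.sum_eq_single (some p)] at hq
    · rw [hsome, if_pos rfl, smul_eq_mul, mul_one] at hq
      exact hq
    · intro x _ hx
      match x with
      | none =>
        rw [show vfam k c J none = 1 from rfl, coord_one k c hc, if_neg, smul_zero]
        exact Nat.one_le_iff_ne_zero.mp (hmem p).1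
      | some p' =>
        rw [hsome, if_neg, smul_zero]
        intro he
        apply hx
        obtain ⟨h1, h2⟩ := Sigma.mk.inj_iff.mp he
        obtain ⟨i', d'⟩ := p'
        obtain ⟨i, d⟩ := p
        dsimp at h1 h2
        subst h1
        have h3 : (d' : ℕ) = (d : ℕ) := congrArg Fin.val (eq_of_heq h2)
        rw [Subtype.ext h3]
    · simp
  intro x
  match x with
  | some p => exact hg_some p
  | none =>
    have hq := key ⟨⟨0, hm⟩, ⟨0, hc _⟩⟩
    rw [Finset.sum_eq_single none] at hq
    · rw [show vfam k c J none = 1 from rfl, coord_one k c hc, if_pos rfl, smul_eq_mul,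
        mul_one] at hq
      exact hq
    · intro x _ hx
      match x with
      | none => exact absurd rfl hx
      | some p' =>
        rw [hsome, if_neg, smul_zero]
        intro he
        obtain ⟨h1, h2⟩ := Sigma.mk.inj_iff.mp he
        have h3 : ((p'.2 : ℕ) : ℕ) = ((⟨0, hc _⟩ : Fin (c ⟨0, hm⟩)) : ℕ) :=
          (Fin.heq_ext_iff (by rw [h1])).mp h2
        have := (hmem p').1
        simp at h3
        omega
    · simp

lemma mem_Aplus_iff {k : Type*} [CommRing k] {ι : Type*} (c : ι → ℕ)
    (hc : ∀ i, 1 ≤ c i) (x : TruncPi k c) :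
    x ∈ Aplus k c hc ↔ ∀ i j, constTerm k (c i) (hc i) (x i) = constTerm k (c j) (hc j) (x j) := by
  simp only [Aplus, Algebra.mem_iInf, AlgHom.mem_equalizer, AlgHom.comp_apply,
    Pi.evalAlgHom_apply]

lemma constTerm_basis_coord {k : Type*} [Field k] {m : ℕ} (c : Fin m → ℕ)
    (hc : ∀ i, 1 ≤ c i) (q : Σ i : Fin m, Fin (c i)) (i : Fin m) :
    constTerm k (c i) (hc i) ((piBasis k c q) i)
      = if q = ⟨i, ⟨0, hc i⟩⟩ then 1 else 0 := by
  obtain ⟨i', j⟩ := q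
  rw [piBasis_apply]
  show constTerm k (c i) (hc i) ((Pi.single i' (truncX k (c i') ^ (j:ℕ)) : TruncPi k c) i) = _
  by_cases h : i' = i
  · subst h
    rw [Pi.single_eq_same, constTerm_pow]
    by_cases h0 : (j : ℕ) = 0
    · rw [if_pos h0, if_pos]
      congr 1
      ext
      exact h0
    · rw [if_neg h0, if_neg]
      intro he
      obtain ⟨_, h2⟩ := Sigma.mk.inj_iff.mp he
      exact h0 (congrArg Fin.val (eq_of_heq h2))
  · rw [Pi.single_eq_of_ne (Ne.symm h), map_zero, if_neg]
    intro he
    exact h (congrArg Sigma.fst he)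

lemma constTerm_eq_repr {k : Type*} [Field k] {m : ℕ} (c : Fin m → ℕ)
    (hc : ∀ i, 1 ≤ c i) (y : TruncPi k c) (i : Fin m) :
    constTerm k (c i) (hc i) (y i) = (piBasis k c).repr y ⟨i, ⟨0, hc i⟩⟩ := by
  classical
  conv_lhs => rw [← Module.Basis.sum_repr (piBasis k c) y]
  rw [Finset.sum_apply, map_sum]
  have : ∀ q : Σ i : Fin m, Fin (c i),
      constTerm k (c i) (hc i) (((piBasis k c).repr y q • piBasis k c q) i)
        = (piBasis k c).repr y q * (if q = ⟨i, ⟨0, hc i⟩⟩ then 1 else 0) := by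
    intro q
    rw [Pi.smul_apply, map_smul, constTerm_basis_coord, smul_eq_mul]
  simp_rw [this]
  rw [Finset.sum_eq_single (⟨i, ⟨0, hc i⟩⟩ : Σ i : Fin m, Fin (c i))]
  · rw [if_pos rfl, mul_one]
  · intro b _ hb
    rw [if_neg hb, mul_zero]
  · simp

lemma tpow_mem_Aplus {k : Type*} [Field k] {m : ℕ} (c : Fin m → ℕ)
    (hc : ∀ i, 1 ≤ c i) (i : Fin m) (d : ℕ) (hd : 1 ≤ d) :
    (tpow c i d : TruncPi k c) ∈ Aplus k c hc := by
  rw [mem_Aplus_iff]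
  have key : ∀ i', constTerm k (c i') (hc i') ((tpow c i d : TruncPi k c) i') = 0 := by
    intro i'
    by_cases h : i = i'
    · subst h
      rw [tpow, Pi.single_eq_same, constTerm_pow, if_neg (by omega)]
    · rw [tpow, Pi.single_eq_of_ne (Ne.symm h), map_zero]
  intro i' j'
  rw [key, key]

lemma span_Ifull_eq_Aplus {k : Type*} [Field k] {m : ℕ} (hm : 1 ≤ m) (c : Fin m → ℕ)
    (hc : ∀ i, 1 ≤ c i) :
    Submodule.span k (Set.range (vfam k c (fun i => Finset.Ico 1 (c i))))
      = Subalgebra.toSubmodule (Aplus k c hc) := by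
  classical
  apply le_antisymm
  · rw [Submodule.span_le]
    rintro _ ⟨x, rfl⟩
    match x with
    | none => exact (Aplus k c hc).one_mem
    | some p =>
      have := p.2.2
      rw [Finset.mem_Ico] at this
      exact tpow_mem_Aplus c hc p.1 p.2.1 this.1
  · intro x hx
    rw [Subalgebra.mem_toSubmodule, mem_Aplus_iff] at hx
    set i₀ : Fin m := ⟨0, hm⟩
    set r : k := constTerm k (c i₀) (hc i₀) (x i₀) with hr
    set y : TruncPi k c := x - r • 1 with hy
    have hyrepr : ∀ i : Fin m, (piBasis k c).repr y ⟨i, ⟨0, hc i⟩⟩ = 0 := by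
      intro i
      rw [← constTerm_eq_repr]
      have h1 : y i = x i - r • (1 : TruncP k (c i)) := by
        rw [hy]; rfl
      rw [h1, map_sub, map_smul, map_one, hx i i₀, ← hr, smul_eq_mul, mul_one, sub_self]
    have hone : (1 : TruncPi k c) ∈ Submodule.span k
        (Set.range (vfam k c (fun i => Finset.Ico 1 (c i)))) :=
      Submodule.subset_span ⟨none, rfl⟩
    have hymem : y ∈ Submodule.span k (Set.range (vfam k c (fun i => Finset.Ico 1 (c i)))) := by
      rw [show y = ∑ q, (piBasis k c).repr y q • piBasis k c q from
        (Module.Basis.sum_repr (piBasis k c) y).symm]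
      apply Submodule.sum_mem
      intro q _
      by_cases h0 : (q.2 : ℕ) = 0
      · have : q = ⟨q.1, ⟨0, hc q.1⟩⟩ := by
          obtain ⟨qi, qj⟩ := q
          congr 1
          ext
          exact h0
        rw [this, hyrepr]
        rw [zero_smul (M₀ := k) (A := TruncPi k c)]
        exact Submodule.zero_mem _
      · apply Submodule.smul_mem
        apply Submodule.subset_span
        refine ⟨some ⟨q.1, ⟨(q.2 : ℕ), ?_⟩⟩, ?_⟩
        · rw [Finset.mem_Ico]
          exact ⟨by omega, q.2.2⟩
        · show tpow c q.1 (q.2 : ℕ) = _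
          rw [← piBasis_apply]
      done
    have : x = y + r • 1 := by rw [hy]; ring
    rw [this]
    exact Submodule.add_mem _ hymem (Submodule.smul_mem _ _ hone)

lemma spanB {k : Type*} [Field k] {m : ℕ} (c : Fin m → ℕ) (hc : ∀ i, 1 ≤ c i)
    (B : Subalgebra k (TruncPi k c)) (hB : B ≤ Aplus k c hc)
    (S : Set (Fin m × ℕ))
    (hspan : Subalgebra.toSubmodule B
      = Submodule.span k ({1} ∪ {x | ∃ p ∈ S, x = tpow c p.1 p.2}))
    (J : Fin m → Finset ℕ)
    (hJ : ∀ i d, d ∈ J i ↔ (1 ≤ d ∧ d < c i ∧ tpow c i d ∈ B)) :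
    Subalgebra.toSubmodule B = Submodule.span k (Set.range (vfam k c J)) := by
  have hBgen : ∀ x ∈ ({1} ∪ {x | ∃ p ∈ S, x = tpow c p.1 p.2} : Set (TruncPi k c)), x ∈ B := by
    intro x hx
    rw [← Subalgebra.mem_toSubmodule, hspan]
    exact Submodule.subset_span hx
  apply le_antisymm
  · rw [hspan, Submodule.span_le]
    rintro x hx
    rcases hx with hx | ⟨p, hp, rfl⟩
    · rw [Set.mem_singleton_iff] at hx
      subst hx
      exact Submodule.subset_span ⟨none, rfl⟩
    · have hmem : (tpow c p.1 p.2 : TruncPi k c) ∈ B :=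
        hBgen _ (Or.inr ⟨p, hp, rfl⟩)
      rcases Nat.lt_or_ge p.2 1 with h1 | h1
      · -- p.2 = 0
        have h0 : p.2 = 0 := by omega
        have htp : (tpow c p.1 p.2 : TruncPi k c) = 1 := by
          by_cases hall : ∀ j : Fin m, j = p.1
          · funext j
            have hj := hall j
            subst hj
            rw [tpow, h0, pow_zero, Pi.single_eq_same]
            rfl
          · push_neg at hall
            obtain ⟨j, hj⟩ := hall
            exfalso
            have hap := hB hmem
            rw [mem_Aplus_iff] at hap
            have := hap p.1 j
            rw [tpow, h0, pow_zero, Pi.single_eq_same, map_one,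
              Pi.single_eq_of_ne hj, map_zero] at this
            exact one_ne_zero this
        rw [htp]
        exact Submodule.subset_span ⟨none, rfl⟩
      · rcases Nat.lt_or_ge p.2 (c p.1) with h2 | h2
        · refine Submodule.subset_span ⟨some ⟨p.1, ⟨p.2, ?_⟩⟩, rfl⟩
          rw [hJ]
          exact ⟨h1, h2, hmem⟩
        · rw [tpow_eq_zero c p.1 p.2 h2]
          exact Submodule.zero_mem _
  · rw [Submodule.span_le]
    rintro _ ⟨x, rfl⟩
    match x with
    | none => exact B.one_mem
    | some p =>
      have := (hJ p.1 p.2.1).mp p.2.2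
      exact this.2.2

lemma mem_monoidOf_iff {k : Type*} [Field k] {m : ℕ} (c : Fin m → ℕ)
    (B : Subalgebra k (TruncPi k c)) (i : Fin m) (d : ℕ) :
    d ∈ monoidOf c B i ↔ d = 0 ∨ (1 ≤ d ∧ d < c i ∧ tpow c i d ∈ B) ∨ c i ≤ d := by
  simp [monoidOf, Set.mem_union, Set.mem_setOf_eq, Set.mem_singleton_iff, or_assoc]

/-- a corank-`g` subalgebra of `A⁺` spanned by `1` and monomials gives rise to
numerical monoids `Mᵢ` with conductor at most `cᵢ` and total genus `g`, and `B` is the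
monomial span associated to them. -/
theorem monomial_subalgebra_gives_numerical_monoids
    {k : Type*} [Field k] {m : ℕ} (hm : 1 ≤ m) (c : Fin m → ℕ) (hc : ∀ i, 1 ≤ c i)
    (B : Subalgebra k (TruncPi k c)) (hB : B ≤ Aplus k c hc)
    (g : ℕ) (hg : Module.finrank k ↥B + g = Module.finrank k ↥(Aplus k c hc))
    (S : Set (Fin m × ℕ))
    (hspan : Subalgebra.toSubmodule B
      = Submodule.span k ({1} ∪ {x | ∃ p ∈ S, x = tpow c p.1 p.2})) :
    (∀ i, ∀ a ∈ monoidOf c B i, ∀ b ∈ monoidOf c B i, a + b ∈ monoidOf c B i) ∧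
    (∀ i, ∀ n : ℕ, c i ≤ n → n ∈ monoidOf c B i) ∧
    (∑ i, Set.ncard {n : ℕ | n ∉ monoidOf c B i}) = g ∧
    Subalgebra.toSubmodule B = Submodule.span k
      ({1} ∪ {x | ∃ i, ∃ d, 1 ≤ d ∧ d < c i ∧ d ∈ monoidOf c B i ∧ x = tpow c i d}) := by
  classical
  -- the "good exponent" finsets
  set Dfin : Fin m → Finset ℕ :=
    fun i => (Finset.Ico 1 (c i)).filter (fun d => tpow c i d ∈ B) with hDfin
  have hJ : ∀ i d, d ∈ Dfin i ↔ (1 ≤ d ∧ d < c i ∧ (tpow c i d : TruncPi k c) ∈ B) := by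
    intro i d
    rw [hDfin]
    simp [Finset.mem_filter, Finset.mem_Ico, and_assoc]
  have hJsub : ∀ i, Dfin i ⊆ Finset.Ico 1 (c i) := fun i => Finset.filter_subset _ _
  have hBspan := spanB c hc B hB S hspan Dfin hJ
  refine ⟨?_, ?_, ?_, ?_⟩
  -- 1: closure under addition
  · intro i a ha b hb
    rw [mem_monoidOf_iff] at ha hb ⊢
    rcases ha with rfl | ha | ha
    · simpa using hb
    · rcases hb with rfl | hb | hb
      · right; left; simpa using ha
      · rcases Nat.lt_or_ge (a + b) (c i) with hlt | hge
        · right; left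
          refine ⟨by omega, hlt, ?_⟩
          rw [← tpow_mul]
          exact B.mul_mem ha.2.2 hb.2.2
        · right; right; exact hge
      · right; right; omega
    · right; right; omega
  -- 2: contains the tail
  · intro i n hn
    rw [mem_monoidOf_iff]
    right; right; exact hn
  -- 3: genus count
  · have hAfr : Module.finrank k ↥(Aplus k c hc) = (∑ i, (c i - 1)) + 1 := by
      have h0 : Module.finrank k ↥(Aplus k c hc)
          = Module.finrank k ↥(Subalgebra.toSubmodule (Aplus k c hc)) := rfl
      rw [h0, ← span_Ifull_eq_Aplus hm c hc,
        finrank_span_eq_card (vfam_li k hm c hc _ (fun i => subset_rfl))]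
      rw [Fintype.card_option, Fintype.card_sigma]
      congr 1
      refine Finset.sum_congr rfl fun i _ => ?_
      rw [Fintype.card_coe, Nat.card_Ico]
    have hBfr : Module.finrank k ↥B = (∑ i, (Dfin i).card) + 1 := by
      have h0 : Module.finrank k ↥B = Module.finrank k ↥(Subalgebra.toSubmodule B) := rfl
      rw [h0, hBspan, finrank_span_eq_card (vfam_li k hm c hc _ hJsub)]
      rw [Fintype.card_option, Fintype.card_sigma]
      congr 1
      exact Finset.sum_congr rfl fun i _ => Fintype.card_coe _
    set Gfin : Fin m → Finset ℕ :=
      fun i => (Finset.Ico 1 (c i)).filter (fun d => tpow c i d ∉ B) with hGfin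
    have hgap : ∀ i, {n : ℕ | n ∉ monoidOf c B i} = ↑(Gfin i) := by
      intro i
      ext n
      simp only [Set.mem_setOf_eq, hGfin, Finset.coe_filter, Finset.mem_Ico, mem_monoidOf_iff]
      constructor
      · intro h
        have h0 : n ≠ 0 := fun he => h (Or.inl he)
        have hhigh : ¬ c i ≤ n := fun he => h (Or.inr (Or.inr he))
        exact ⟨⟨by omega, by omega⟩, fun hBm => h (Or.inr (Or.inl ⟨by omega, by omega, hBm⟩))⟩
      · rintro ⟨⟨h1, h2⟩, hnB⟩ (h0 | hmid | hhigh)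
        · omega
        · exact hnB hmid.2.2
        · omega
    have hcards : ∀ i, (Dfin i).card + (Gfin i).card = c i - 1 := by
      intro i
      rw [hDfin, hGfin]
      rw [Finset.card_filter_add_card_filter_not, Nat.card_Ico]
    have hsum : (∑ i, (Dfin i).card) + (∑ i, (Gfin i).card) = ∑ i, (c i - 1) := by
      rw [← Finset.sum_add_distrib]
      exact Finset.sum_congr rfl fun i _ => hcards i
    have hgcount : ∑ i, Set.ncard {n : ℕ | n ∉ monoidOf c B i} = ∑ i, (Gfin i).card := by
      refine Finset.sum_congr rfl fun i _ => ?_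
      rw [hgap i, Set.ncard_coe_finset]
    rw [hgcount]
    rw [hAfr, hBfr] at hg
    omega
  -- 4: span description
  · rw [hBspan]
    congr 1
    ext x
    constructor
    · rintro ⟨o, rfl⟩
      match o with
      | none => exact Or.inl rfl
      | some p =>
        obtain ⟨h1, h2, h3⟩ := (hJ p.1 p.2.1).mp p.2.2
        exact Or.inr ⟨p.1, p.2.1, h1, h2,
          (mem_monoidOf_iff c B p.1 p.2.1).mpr (Or.inr (Or.inl ⟨h1, h2, h3⟩)), rfl⟩
    · rintro (rfl | ⟨i, d, h1, h2, h3, rfl⟩)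
      · exact ⟨none, rfl⟩
      · rw [mem_monoidOf_iff] at h3
        have hBm : (tpow c i d : TruncPi k c) ∈ B := by
          rcases h3 with rfl | h3 | h3
          · omega
          · exact h3.2.2
          · omega
        exact ⟨some ⟨i, ⟨d, (hJ i d).mpr ⟨h1, h2, hBm⟩⟩⟩, rfl⟩
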